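/- Let F = (f₀,g₀) ∈ B², let y₀ ∈ (−1,1) with g₀ ≠ y₀, and let P = (x,y) ∈ B² be a point lying strictly on the opposite side of the line s: y = y₀ from F, i.e. (y₀ − g₀)(y₀ − y) < 0. Then the Funk distance from the line s to P is strictly smaller than the Funk distance from F to P: ln ρ(y₀,y) < d_F(F,P). Consequently, every point of the Funk parabola of type 1 (the set of P ∈ B² with d_F(F,P) = ln ρ(y₀,y)) lies weakly on the same side of s as the focus F. -/

import Mathlib

lemma lt_of_sq_lt' (s b : ℝ) (hs0 : 0 ≤ s) (h : b^2 < s^2) : b < s := by nlinarith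

lemma yA_le' (X Y V : ℝ) (hV : 0 < V) (h : X^2 + Y^2 = V^2) : Y ≤ V := by nlinarith [sq_nonneg X]

lemma step' (V a s y₀ g₀ y : ℝ) (hg : g₀ < y₀)
    (hsb : 0 < s - a - V) (hyA : V*g₀ + (s-a)*(y-g₀) ≤ V) :
    (1-y₀)*(s-(a+V)) < (1-y)*(s-a) := by
  nlinarith [mul_pos (by linarith : (0:ℝ) < y₀ - g₀) hsb]

lemma sb_pos' (f₀ g₀ x y s : ℝ) (hP : x^2 + y^2 < 1)
    (hV : 0 < (x-f₀)^2 + (y-g₀)^2) (hs0 : 0 ≤ s)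
    (hs : s^2 = (f₀*(x-f₀)+g₀*(y-g₀))^2 + (1-f₀^2-g₀^2)*((x-f₀)^2+(y-g₀)^2)) :
    0 < s - (x*(x-f₀)+y*(y-g₀)) := by
  have hid : s^2 - (x*(x-f₀)+y*(y-g₀))^2 = (1-x^2-y^2) * ((x-f₀)^2+(y-g₀)^2) := by
    linear_combination hs
  have h1 := mul_pos (by linarith : (0:ℝ) < 1 - x^2 - y^2) hV
  have := lt_of_sq_lt' s (x*(x-f₀)+y*(y-g₀)) hs0 (by linarith)
  linarith

lemma key_ineq' (f₀ g₀ y₀ x y s : ℝ) (hP : x^2 + y^2 < 1)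
    (hg : g₀ < y₀) (hy : y₀ < y) (hs0 : 0 ≤ s)
    (hs : s^2 = (f₀*(x-f₀)+g₀*(y-g₀))^2 + (1-f₀^2-g₀^2)*((x-f₀)^2+(y-g₀)^2)) :
    (1-y₀) * (s - (x*(x-f₀)+y*(y-g₀))) < (1-y) * (s - (f₀*(x-f₀)+g₀*(y-g₀))) := by
  have hV : 0 < (x-f₀)^2 + (y-g₀)^2 := by nlinarith [sq_nonneg (x-f₀)]
  have hsb := sb_pos' f₀ g₀ x y s hP hV hs0 hs
  have hcirc : (((x-f₀)^2+(y-g₀)^2)*f₀ + (s-(f₀*(x-f₀)+g₀*(y-g₀)))*(x-f₀))^2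
      + (((x-f₀)^2+(y-g₀)^2)*g₀ + (s-(f₀*(x-f₀)+g₀*(y-g₀)))*(y-g₀))^2
      = ((x-f₀)^2+(y-g₀)^2)^2 := by
    linear_combination ((x-f₀)^2+(y-g₀)^2) * hs
  have hyA := yA_le' _ _ _ hV hcirc
  have hb : x*(x-f₀)+y*(y-g₀) = (f₀*(x-f₀)+g₀*(y-g₀)) + ((x-f₀)^2+(y-g₀)^2) := by ring
  rw [hb]
  exact step' _ _ _ _ _ _ hg (by rw [hb] at hsb; linarith) hyA

/-- The Funk distance on the open unit ball of Euclidean n-space: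
`d_F(P,Q) = ln((√k − ⟨P, Q−P⟩)/(√k − ⟨Q, Q−P⟩))` with
`k = ⟨P, Q−P⟩² + (1 − ‖P‖²)‖Q−P‖²`. -/
noncomputable def funkDist {n : ℕ} (P Q : EuclideanSpace ℝ (Fin n)) : ℝ :=
  Real.log
    ((Real.sqrt ((inner ℝ P (Q - P) : ℝ) ^ 2 + (1 - ‖P‖ ^ 2) * ‖Q - P‖ ^ 2) - (inner ℝ P (Q - P) : ℝ)) /
     (Real.sqrt ((inner ℝ P (Q - P) : ℝ) ^ 2 + (1 - ‖P‖ ^ 2) * ‖Q - P‖ ^ 2) - (inner ℝ Q (Q - P) : ℝ)))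

/-- `ρ(ε,η) = (1 + sgn(ε−η)·ε)/(1 + sgn(ε−η)·η)`. -/
noncomputable def rho (ε η : ℝ) : ℝ :=
  (1 + Real.sign (ε - η) * ε) / (1 + Real.sign (ε - η) * η)

/-- The point `(a,b)` of the Euclidean plane. -/
def pt (a b : ℝ) : EuclideanSpace ℝ (Fin 2) := WithLp.toLp 2 ![a, b]

lemma inner_pt (a b c d : ℝ) : (inner ℝ (pt a b) (pt c d) : ℝ) = a*c + b*d := by
  simp [pt, PiLp.inner_apply, Fin.sum_univ_two]; ring

lemma norm_pt_sq (a b : ℝ) : ‖pt a b‖^2 = a^2 + b^2 := by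
  rw [EuclideanSpace.norm_eq, Real.sq_sqrt (by positivity)]
  simp [pt, Fin.sum_univ_two, sq_abs]

lemma pt_sub (a b c d : ℝ) : pt a b - pt c d = pt (a-c) (b-d) := by
  ext i; fin_cases i <;> simp [pt]

lemma funkDist_pt (f₀ g₀ x y : ℝ) :
    funkDist (pt f₀ g₀) (pt x y) =
      Real.log ((Real.sqrt ((f₀*(x-f₀)+g₀*(y-g₀))^2
          + (1-(f₀^2+g₀^2))*((x-f₀)^2+(y-g₀)^2)) - (f₀*(x-f₀)+g₀*(y-g₀))) /
        (Real.sqrt ((f₀*(x-f₀)+g₀*(y-g₀))^2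
          + (1-(f₀^2+g₀^2))*((x-f₀)^2+(y-g₀)^2)) - (x*(x-f₀)+y*(y-g₀)))) := by
  rw [funkDist, pt_sub, inner_pt, inner_pt, norm_pt_sq, norm_pt_sq]

/-- If `P` lies strictly on the opposite side of the directrix `y = y₀` from the focus `F`,
then `d_F(s,P) = ln ρ(y₀,y) < d_F(F,P)`; consequently every point of the type-1 Funk
parabola lies weakly on the same side of the directrix as the focus. -/
theorem funk_parabola_stmt5 (f₀ g₀ y₀ : ℝ) (hF : ‖pt f₀ g₀‖ < 1)
    (hy₀ : -1 < y₀ ∧ y₀ < 1) (hgy : g₀ ≠ y₀) :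
    (∀ x y : ℝ, ‖pt x y‖ < 1 → (y₀ - g₀) * (y₀ - y) < 0 →
      Real.log (rho y₀ y) < funkDist (pt f₀ g₀) (pt x y)) ∧
    (∀ x y : ℝ, ‖pt x y‖ < 1 → funkDist (pt f₀ g₀) (pt x y) = Real.log (rho y₀ y) →
      0 ≤ (y₀ - g₀) * (y₀ - y)) := by
  have hF2 : f₀^2 + g₀^2 < 1 := by
    have h := norm_pt_sq f₀ g₀
    nlinarith [norm_nonneg (pt f₀ g₀)]
  have main : ∀ x y : ℝ, ‖pt x y‖ < 1 → (y₀ - g₀) * (y₀ - y) < 0 →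
      Real.log (rho y₀ y) < funkDist (pt f₀ g₀) (pt x y) := by
    intro x y hP hopp
    have hP2 : x^2 + y^2 < 1 := by
      have h := norm_pt_sq x y
      nlinarith [norm_nonneg (pt x y)]
    have hy1 : -1 < y ∧ y < 1 := by constructor <;> nlinarith [sq_nonneg x]
    set K := (f₀*(x-f₀)+g₀*(y-g₀))^2 + (1-(f₀^2+g₀^2))*((x-f₀)^2+(y-g₀)^2) with hK
    have hK0 : 0 ≤ K :=
      add_nonneg (sq_nonneg _) (mul_nonneg (by linarith) (by positivity))
    have hs0 : 0 ≤ Real.sqrt K := Real.sqrt_nonneg _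
    have hs : (Real.sqrt K)^2 = (f₀*(x-f₀)+g₀*(y-g₀))^2
        + (1-f₀^2-g₀^2)*((x-f₀)^2+(y-g₀)^2) := by
      rw [Real.sq_sqrt hK0]; ring
    rw [funkDist_pt]
    rcases mul_neg_iff.mp hopp with ⟨h1, h2⟩ | ⟨h1, h2⟩
    · -- g₀ < y₀ < y
      have hg : g₀ < y₀ := by linarith
      have hy : y₀ < y := by linarith
      have hkey := key_ineq' f₀ g₀ y₀ x y (Real.sqrt K) hP2 hg hy hs0 hs
      have hV : 0 < (x-f₀)^2 + (y-g₀)^2 := by nlinarith [sq_nonneg (x-f₀)]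
      have hsb := sb_pos' f₀ g₀ x y (Real.sqrt K) hP2 hV hs0 hs
      have hrho : rho y₀ y = (1-y₀)/(1-y) := by
        rw [rho, Real.sign_of_neg (by linarith : y₀ - y < 0)]; ring_nf
      rw [hrho]
      apply Real.log_lt_log (div_pos (by linarith) (by linarith))
      rw [div_lt_div_iff₀ (by linarith) hsb]
      linarith [hkey]
    · -- y < y₀ < g₀
      have hg : -g₀ < -y₀ := by linarith
      have hy : -y₀ < -y := by linarith
      have hkey := key_ineq' f₀ (-g₀) (-y₀) x (-y) (Real.sqrt K)
        (by nlinarith [sq_nonneg x] : x^2 + (-y)^2 < 1) hg hy hs0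
        (by linear_combination hs)
      have hkey2 : (1+y₀) * (Real.sqrt K - (x*(x-f₀)+y*(y-g₀)))
          < (1+y) * (Real.sqrt K - (f₀*(x-f₀)+g₀*(y-g₀))) := by
        linear_combination hkey
      have hV : 0 < (x-f₀)^2 + (y-g₀)^2 := by nlinarith [sq_nonneg (x-f₀)]
      have hsb := sb_pos' f₀ g₀ x y (Real.sqrt K) hP2 hV hs0 hs
      have hrho : rho y₀ y = (1+y₀)/(1+y) := by
        rw [rho, Real.sign_of_pos (by linarith : 0 < y₀ - y)]; ring_nf
      rw [hrho]
      apply Real.log_lt_log (div_pos (by linarith) (by linarith))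
      rw [div_lt_div_iff₀ (by linarith) hsb]
      linarith [hkey2]
  refine ⟨main, fun x y hP heq => ?_⟩
  by_contra h
  push_neg at h
  exact absurd heq (ne_of_gt (main x y hP h))
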